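/- Let φ : ℝ³ → ℝ³ be defined by φ(x₁,x₂,x₃) = (x₁, x₂, x₃−|x₁|−|x₂|). Then at every point x = (x₁,x₂,x₃) with x₁ ≠ 0 and x₂ ≠ 0, the map φ is differentiable, its Jacobian determinant equals 1, ‖Dφ(x)‖ = √(2+√3) and ℓ(Dφ(x)) = √(2−√3); in particular the ratio ‖Dφ(x)‖/ℓ(Dφ(x)) is the same constant at all such points. -/

import Mathlib

/-- The quasiconformal shear map `φ(x₁,x₂,x₃) = (x₁, x₂, x₃ − |x₁| − |x₂|)`. -/
noncomputable def phiMap (x : EuclideanSpace ℝ (Fin 3)) : EuclideanSpace ℝ (Fin 3) :=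
  (WithLp.equiv 2 (Fin 3 → ℝ)).symm ![x 0, x 1, x 2 - |x 0| - |x 1|]

/-- `ℓ(L) = inf_{|h|=1} |L h|`, the minimal stretching of a linear map `L : ℝ³ → ℝ³`. -/
noncomputable def ell (L : EuclideanSpace ℝ (Fin 3) →L[ℝ] EuclideanSpace ℝ (Fin 3)) : ℝ :=
  ⨅ h : Metric.sphere (0 : EuclideanSpace ℝ (Fin 3)) 1, ‖L (h : EuclideanSpace ℝ (Fin 3))‖

/-- The linear shear `(h₀,h₁,h₂) ↦ (h₀,h₁,h₂ − a h₀ − b h₁)` as a continuous linear map. -/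
noncomputable def Lmap (a b : ℝ) : EuclideanSpace ℝ (Fin 3) →L[ℝ] EuclideanSpace ℝ (Fin 3) :=
  LinearMap.toContinuousLinearMap
  { toFun := fun h => (WithLp.equiv 2 (Fin 3 → ℝ)).symm ![h 0, h 1, h 2 - a * h 0 - b * h 1]
    map_add' := by
      intro u v; ext i; fin_cases i <;>
        simp [PiLp.toLp_apply, PiLp.add_apply] <;> ring
    map_smul' := by
      intro c u; ext i; fin_cases i <;>
        simp [PiLp.toLp_apply, PiLp.smul_apply] <;> ring }

lemma Lmap_apply (a b : ℝ) (h : EuclideanSpace ℝ (Fin 3)) :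
    Lmap a b h = (WithLp.equiv 2 (Fin 3 → ℝ)).symm ![h 0, h 1, h 2 - a * h 0 - b * h 1] := rfl

lemma norm_e3 (p q r : ℝ) :
    ‖(WithLp.equiv 2 (Fin 3 → ℝ)).symm ![p, q, r]‖ = Real.sqrt (p^2 + q^2 + r^2) := by
  rw [EuclideanSpace.norm_eq, Fin.sum_univ_three]
  simp [sq_abs, Real.norm_eq_abs]

lemma norm_h3 (h : EuclideanSpace ℝ (Fin 3)) :
    ‖h‖ = Real.sqrt ((h 0)^2 + (h 1)^2 + (h 2)^2) := by
  rw [EuclideanSpace.norm_eq, Fin.sum_univ_three]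
  simp [sq_abs, Real.norm_eq_abs]

lemma norm_Lmap_apply (a b : ℝ) (h : EuclideanSpace ℝ (Fin 3)) :
    ‖Lmap a b h‖ = Real.sqrt ((h 0)^2 + (h 1)^2 + (h 2 - a * h 0 - b * h 1)^2) := by
  rw [Lmap_apply, norm_e3]

lemma sign_ev (c : ℝ) (hc : c ≠ 0) : ∃ a : ℝ, a^2 = 1 ∧ ∀ᶠ y in nhds c, |y| = a * y := by
  rcases hc.lt_or_gt with h | h
  · exact ⟨-1, by norm_num, (eventually_lt_nhds h).mono fun y hy => by
      rw [abs_of_neg hy]; ring⟩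
  · exact ⟨1, by norm_num, (eventually_gt_nhds h).mono fun y hy => by
      rw [abs_of_pos hy]; ring⟩

lemma upper1 (s y0 y1 y2 : ℝ) (hs : s^2 = 3) (hs1 : 1 ≤ s) :
    y0^2 + y1^2 + (y2 - y0 - y1)^2 ≤ (2+s)*(y0^2+y1^2+y2^2) := by
  nlinarith [mul_nonneg (sub_nonneg.mpr hs1) (sq_nonneg (y0+y1+(s+1)*y2)),
    sq_nonneg (y0-y1), mul_nonneg (by linarith : (0:ℝ) ≤ s+1) (sq_nonneg (y0-y1)),
    sq_nonneg y2, hs, sq_nonneg (y0+y1), mul_nonneg (sub_nonneg.mpr hs1) (sq_nonneg y2)]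

lemma lower1 (s y0 y1 y2 : ℝ) (hs : s^2 = 3) (hs1 : 1 ≤ s) :
    (2-s)*(y0^2+y1^2+y2^2) ≤ y0^2 + y1^2 + (y2 - y0 - y1)^2 := by
  nlinarith [mul_nonneg (by linarith : (0:ℝ) ≤ s+1) (sq_nonneg (y0+y1-(s-1)*y2)),
    mul_nonneg (sub_nonneg.mpr hs1) (sq_nonneg (y0-y1)),
    sq_nonneg (y0-y1), sq_nonneg y2, mul_nonneg (sub_nonneg.mpr hs1) (sq_nonneg y2)]

lemma sqrt3_sq : (Real.sqrt 3)^2 = 3 := Real.sq_sqrt (by norm_num)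
lemma sqrt3_ge1 : 1 ≤ Real.sqrt 3 := by
  nlinarith [Real.sqrt_nonneg 3, sqrt3_sq]
lemma sqrt3_le2 : Real.sqrt 3 ≤ 2 := by
  nlinarith [Real.sqrt_nonneg 3, sqrt3_sq]

lemma det_Lmap (a b : ℝ) : (Lmap a b).det = 1 := by
  rw [ContinuousLinearMap.det]
  rw [← LinearMap.det_toMatrix (EuclideanSpace.basisFun (Fin 3) ℝ).toBasis]
  rw [Matrix.det_fin_three]
  simp [LinearMap.toMatrix_apply, Lmap, EuclideanSpace.basisFun_apply]

lemma norm_Lmap (a b : ℝ) (ha : a^2 = 1) (hb : b^2 = 1) :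
    ‖Lmap a b‖ = Real.sqrt (2 + Real.sqrt 3) := by
  set s := Real.sqrt 3 with hsdef
  have hs : s^2 = 3 := sqrt3_sq
  have hs1 : (1:ℝ) ≤ s := sqrt3_ge1
  apply le_antisymm
  · apply ContinuousLinearMap.opNorm_le_bound _ (Real.sqrt_nonneg _)
    intro h
    have ea : (a * h 0)^2 = (h 0)^2 := by rw [mul_pow, ha, one_mul]
    have eb : (b * h 1)^2 = (h 1)^2 := by rw [mul_pow, hb, one_mul]
    have key := upper1 s (a * h 0) (b * h 1) (h 2) hs hs1
    rw [norm_Lmap_apply, norm_h3]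
    rw [← Real.sqrt_mul (by linarith : (0:ℝ) ≤ 2 + s)]
    apply Real.sqrt_le_sqrt
    have ea' : (2+s)*((a*h 0)^2 + (b*h 1)^2 + (h 2)^2) = (2+s)*((h 0)^2+(h 1)^2+(h 2)^2) := by
      rw [ea, eb]
    linarith [key, ea, eb, ea']
  · set v : EuclideanSpace ℝ (Fin 3) :=
      (WithLp.equiv 2 (Fin 3 → ℝ)).symm ![-(s+1)*a/2, -(s+1)*b/2, 1] with hv
    have hv0 : v 0 = -(s+1)*a/2 := rfl
    have hv1 : v 1 = -(s+1)*b/2 := rfl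
    have hv2 : v 2 = 1 := rfl
    have hnv : ‖v‖ = Real.sqrt (3 + s) := by
      rw [norm_h3, hv0, hv1, hv2]
      congr 1; nlinarith [ha, hb, hs]
    have hnLv : ‖Lmap a b v‖ = Real.sqrt ((2+s)*(3+s)) := by
      rw [norm_Lmap_apply, hv0, hv1, hv2]
      congr 1; nlinarith [ha, hb, hs]
    have hvpos : (0:ℝ) < Real.sqrt (3 + s) := Real.sqrt_pos.mpr (by linarith)
    have hle := (Lmap a b).le_opNorm v
    rw [hnLv, hnv, Real.sqrt_mul (by linarith : (0:ℝ) ≤ 2 + s)] at hle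
    exact le_of_mul_le_mul_right hle hvpos

lemma ell_Lmap (a b : ℝ) (ha : a^2 = 1) (hb : b^2 = 1) :
    ell (Lmap a b) = Real.sqrt (2 - Real.sqrt 3) := by
  set s := Real.sqrt 3 with hsdef
  have hs : s^2 = 3 := sqrt3_sq
  have hs1 : (1:ℝ) ≤ s := sqrt3_ge1
  have hs2 : s ≤ 2 := sqrt3_le2
  have h3s : (0:ℝ) < 3 - s := by linarith
  set w' : EuclideanSpace ℝ (Fin 3) :=
    (WithLp.equiv 2 (Fin 3 → ℝ)).symm ![(s-1)*a/2, (s-1)*b/2, 1] with hw'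
  have hw0 : w' 0 = (s-1)*a/2 := rfl
  have hw1 : w' 1 = (s-1)*b/2 := rfl
  have hw2 : w' 2 = 1 := rfl
  have hnw' : ‖w'‖ = Real.sqrt (3 - s) := by
    rw [norm_h3, hw0, hw1, hw2]; congr 1; nlinarith [ha, hb, hs]
  have hnLw' : ‖Lmap a b w'‖ = Real.sqrt ((2-s)*(3-s)) := by
    rw [norm_Lmap_apply, hw0, hw1, hw2]; congr 1; nlinarith [ha, hb, hs]
  have hwpos : (0:ℝ) < Real.sqrt (3 - s) := Real.sqrt_pos.mpr h3s
  set w : EuclideanSpace ℝ (Fin 3) := (Real.sqrt (3 - s))⁻¹ • w' with hw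
  have hnw : ‖w‖ = 1 := by
    rw [hw, norm_smul, hnw', norm_inv, Real.norm_eq_abs,
      abs_of_pos hwpos, inv_mul_cancel₀ (ne_of_gt hwpos)]
  have hwmem : w ∈ Metric.sphere (0 : EuclideanSpace ℝ (Fin 3)) 1 := by
    simpa [mem_sphere_zero_iff_norm] using hnw
  have hnLw : ‖Lmap a b w‖ = Real.sqrt (2 - s) := by
    rw [hw, map_smul, norm_smul, hnLw', norm_inv, Real.norm_eq_abs, abs_of_pos hwpos,
      Real.sqrt_mul (by linarith : (0:ℝ) ≤ 2 - s)]
    field_simp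
  haveI : Nonempty (Metric.sphere (0 : EuclideanSpace ℝ (Fin 3)) 1) := ⟨⟨w, hwmem⟩⟩
  apply le_antisymm
  · have := ciInf_le (f := fun h : Metric.sphere (0 : EuclideanSpace ℝ (Fin 3)) 1 =>
      ‖Lmap a b (h : EuclideanSpace ℝ (Fin 3))‖)
      ⟨0, by rintro y ⟨h, rfl⟩; exact norm_nonneg _⟩ ⟨w, hwmem⟩
    rw [ell]
    simpa [hnLw] using this
  · apply le_ciInf
    rintro ⟨h, hmem⟩
    have hn1 : ‖h‖ = 1 := mem_sphere_zero_iff_norm.mp hmem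
    have ea : (a * h 0)^2 = (h 0)^2 := by rw [mul_pow, ha, one_mul]
    have eb : (b * h 1)^2 = (h 1)^2 := by rw [mul_pow, hb, one_mul]
    have key := lower1 s (a * h 0) (b * h 1) (h 2) hs hs1
    have hsum : (h 0)^2 + (h 1)^2 + (h 2)^2 = 1 := by
      have := norm_h3 h
      rw [hn1] at this
      exact Real.sqrt_eq_one.mp this.symm
    rw [norm_Lmap_apply]
    apply Real.sqrt_le_sqrt
    have ea' : (2-s)*((a*h 0)^2 + (b*h 1)^2 + (h 2)^2) = (2-s)*((h 0)^2+(h 1)^2+(h 2)^2) := by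
      rw [ea, eb]
    have hsum' : (2-s)*((h 0)^2+(h 1)^2+(h 2)^2) = 2-s := by rw [hsum]; ring
    linarith [key, ea, eb, ea', hsum']

/-- At every point with `x₁ ≠ 0` and `x₂ ≠ 0` the map `φ` is differentiable, its
Jacobian determinant equals `1`, `‖Dφ(x)‖ = √(2+√3)` and `ℓ(Dφ(x)) = √(2−√3)`;
in particular `‖Dφ(x)‖/ℓ(Dφ(x))` is the same constant at all such points. -/
theorem phiMap_derivative (x : EuclideanSpace ℝ (Fin 3)) (h1 : x 0 ≠ 0) (h2 : x 1 ≠ 0) :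
    DifferentiableAt ℝ phiMap x ∧
      (fderiv ℝ phiMap x).det = 1 ∧
      ‖fderiv ℝ phiMap x‖ = Real.sqrt (2 + Real.sqrt 3) ∧
      ell (fderiv ℝ phiMap x) = Real.sqrt (2 - Real.sqrt 3) := by
  obtain ⟨a, ha, hafe⟩ := sign_ev (x 0) h1
  obtain ⟨b, hb, hbfe⟩ := sign_ev (x 1) h2
  have hc0 : Continuous fun y : EuclideanSpace ℝ (Fin 3) => y 0 :=
    (continuous_apply (0 : Fin 3)).comp (PiLp.continuous_ofLp 2 fun _ : Fin 3 => ℝ)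
  have hc1 : Continuous fun y : EuclideanSpace ℝ (Fin 3) => y 1 :=
    (continuous_apply (1 : Fin 3)).comp (PiLp.continuous_ofLp 2 fun _ : Fin 3 => ℝ)
  have hev0 : ∀ᶠ y in nhds x, |y 0| = a * y 0 := (hc0.continuousAt (x := x)).eventually hafe
  have hev1 : ∀ᶠ y in nhds x, |y 1| = b * y 1 := (hc1.continuousAt (x := x)).eventually hbfe
  have hEq : phiMap =ᶠ[nhds x] ⇑(Lmap a b) := by
    filter_upwards [hev0, hev1] with y hy0 hy1
    rw [phiMap, Lmap_apply, hy0, hy1]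
  have hdiff : DifferentiableAt ℝ phiMap x :=
    (Lmap a b).differentiableAt.congr_of_eventuallyEq hEq
  have hfd : fderiv ℝ phiMap x = Lmap a b := by
    rw [hEq.fderiv_eq, ContinuousLinearMap.fderiv]
  exact ⟨hdiff, by rw [hfd]; exact det_Lmap a b, by rw [hfd]; exact norm_Lmap a b ha hb,
    by rw [hfd]; exact ell_Lmap a b ha hb⟩
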